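/- The number of points of the form p/b^n (p ∈ Z^d) lying in the product missing digit set K, expressed via the IFS, is at most 2^d · N^n: the set of such points is contained in ∪_{x ∈ {0,1}^d} ∪_{i ∈ Λ^n} {g_i(x)} when {0, b-1} ⊂ J_i for each i. -/

import Mathlib

/-- The base-`b` missing digit set `K_b(J)`. -/
def missingDigitSet (b : ℕ) (J : Finset ℕ) : Set ℝ :=
  {x | ∃ a : ℕ → ℕ, (∀ n, a n ∈ J) ∧ x = ∑' n : ℕ, (a n : ℝ) / (b : ℝ) ^ (n + 1)}

/-- The product missing digit set `K = ∏ K_b(J_i) ⊆ ℝ^d`. -/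
def prodMissingDigitSet (b : ℕ) {d : ℕ} (J : Fin d → Finset ℕ) : Set (Fin d → ℝ) :=
  {x | ∀ i, x i ∈ missingDigitSet b (J i)}

/-- The composition `g_i = g_{i_1} ∘ ⋯ ∘ g_{i_n}` of the product IFS maps
`g_j(x)_i = (x_i + j_i)/b`. -/
noncomputable def gWord (b : ℕ) {d : ℕ} : List (Fin d → ℕ) → (Fin d → ℝ) → (Fin d → ℝ)
  | [] => id
  | j :: l => fun x i => (gWord b l x i + (j i : ℝ)) / (b : ℝ)

lemma gWord_ofFn (b : ℕ) {d : ℕ} : ∀ (n : ℕ) (f : Fin n → Fin d → ℕ) (x : Fin d → ℝ) (i : Fin d),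
    gWord b (List.ofFn f) x i
      = (∑ k : Fin n, (f k i : ℝ) / (b:ℝ) ^ ((k:ℕ)+1)) + x i / (b:ℝ) ^ n
  | 0, f, x, i => by simp [gWord]
  | (n+1), f, x, i => by
      rw [List.ofFn_succ]
      show (gWord b (List.ofFn fun k => f k.succ) x i + (f 0 i : ℝ)) / b = _
      rw [gWord_ofFn b n, Fin.sum_univ_succ]
      rw [add_div, add_div, Finset.sum_div]
      have : ∀ k : Fin n, ((f k.succ i : ℝ) / (b:ℝ)^((k:ℕ)+1)) / b
          = (f k.succ i : ℝ) / (b:ℝ)^(((k.succ:ℕ))+1) := by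
        intro k
        rw [div_div, ← pow_succ]
        simp
      rw [Finset.sum_congr rfl fun k _ => this k]
      rw [div_div, ← pow_succ]
      simp
      ring

lemma digit_decomp (b n : ℕ) (hb : 3 ≤ b) (J : Finset ℕ) (hJ : J ⊆ Finset.range b)
    (a : ℕ → ℕ) (ha : ∀ k, a k ∈ J) (p : ℤ)
    (hy : (∑' k : ℕ, (a k : ℝ) / (b:ℝ)^(k+1)) = (p : ℝ) / (b:ℝ)^n) :
    ∃ s : ℝ, (s = 0 ∨ s = 1) ∧
      (p : ℝ)/(b:ℝ)^n = (∑ k ∈ Finset.range n, (a k : ℝ)/(b:ℝ)^(k+1)) + s / (b:ℝ)^n := by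
  have hb1 : (1:ℝ) < b := by exact_mod_cast lt_of_lt_of_le (by norm_num) hb
  have hb0 : (0:ℝ) < b := lt_trans one_pos hb1
  have hbne : (b:ℝ) ≠ 0 := ne_of_gt hb0
  have hr0 : (0:ℝ) ≤ 1/b := by positivity
  have hr1 : (1:ℝ)/b < 1 := by rw [div_lt_one hb0]; exact hb1
  set f : ℕ → ℝ := fun k => (a k : ℝ) / (b:ℝ)^(k+1) with hf
  have hmaj : ∀ k, f k ≤ ((b:ℝ)-1) * (1/(b:ℝ))^(k+1) := by
    intro k
    have h1 : (a k : ℝ) ≤ (b:ℝ) - 1 := by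
      have := Finset.mem_range.1 (hJ (ha k))
      have : (a k : ℝ) + 1 ≤ b := by exact_mod_cast this
      linarith
    have : f k = (a k : ℝ) * (1/(b:ℝ))^(k+1) := by
      simp [hf, div_eq_mul_inv, inv_pow]
    rw [this]
    exact mul_le_mul_of_nonneg_right h1 (by positivity)
  have hgeo : Summable fun k : ℕ => ((b:ℝ)-1) * (1/(b:ℝ))^(k+1) := by
    apply Summable.mul_left
    exact (summable_geometric_of_lt_one hr0 hr1).comp_injective (add_left_injective 1)
  have hnneg : ∀ k, 0 ≤ f k := fun k => by positivity
  have hsum : Summable f := Summable.of_nonneg_of_le hnneg hmaj hgeo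
  -- tail
  set u : ℝ := ∑' k : ℕ, (a (k + n) : ℝ) / (b:ℝ)^(k+1) with hu
  have htail : ∑' k, f (k + n) = u / (b:ℝ)^n := by
    have : ∀ k : ℕ, f (k + n) = ((a (k+n) : ℝ) / (b:ℝ)^(k+1)) * (1/(b:ℝ)^n) := by
      intro k
      simp only [hf]
      rw [div_mul_div_comm, mul_one, ← pow_add]
      have h : (k+n)+1 = (k+1)+n := by omega
      rw [h]
    rw [tsum_congr this, tsum_mul_right, ← hu, mul_one_div]
  have hsplit : (p : ℝ)/(b:ℝ)^n
      = (∑ k ∈ Finset.range n, f k) + u / (b:ℝ)^n := by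
    rw [← hy, ← Summable.sum_add_tsum_nat_add n hsum, htail]
  -- u bounds
  have hunneg : 0 ≤ u := tsum_nonneg fun k => by positivity
  have hsum' : Summable fun k : ℕ => (a (k + n) : ℝ) / (b:ℝ)^(k+1) := by
    apply Summable.of_nonneg_of_le (fun k => by positivity) _ hgeo
    intro k
    have h1 : (a (k+n) : ℝ) ≤ (b:ℝ) - 1 := by
      have := Finset.mem_range.1 (hJ (ha (k+n)))
      have : (a (k+n) : ℝ) + 1 ≤ b := by exact_mod_cast this
      linarith
    have : (a (k+n) : ℝ) / (b:ℝ)^(k+1) = (a (k+n) : ℝ) * (1/(b:ℝ))^(k+1) := by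
      simp [div_eq_mul_inv, inv_pow]
    rw [this]
    exact mul_le_mul_of_nonneg_right h1 (by positivity)
  have hgeosum : ∑' k : ℕ, ((b:ℝ)-1) * (1/(b:ℝ))^(k+1) = 1 := by
    have h1 : ∀ k : ℕ, (1/(b:ℝ))^(k+1) = (1/(b:ℝ))^k * (1/(b:ℝ)) := fun k => pow_succ _ _
    rw [tsum_mul_left]
    rw [tsum_congr h1, tsum_mul_right, tsum_geometric_of_lt_one hr0 hr1]
    have : (b:ℝ) - 1 ≠ 0 := by linarith
    field_simp
  have hule : u ≤ 1 := by
    rw [← hgeosum]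
    apply Summable.tsum_le_tsum _ hsum' hgeo
    intro k
    have h1 : (a (k+n) : ℝ) ≤ (b:ℝ) - 1 := by
      have := Finset.mem_range.1 (hJ (ha (k+n)))
      have : (a (k+n) : ℝ) + 1 ≤ b := by exact_mod_cast this
      linarith
    have : (a (k+n) : ℝ) / (b:ℝ)^(k+1) = (a (k+n) : ℝ) * (1/(b:ℝ))^(k+1) := by
      simp [div_eq_mul_inv, inv_pow]
    rw [this]
    exact mul_le_mul_of_nonneg_right h1 (by positivity)
  -- u is an integer
  set m : ℤ := p - ∑ k ∈ Finset.range n, (a k : ℤ) * (b:ℤ)^(n-1-k) with hm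
  have hmu : (m : ℝ) = u := by
    have h1 : u = (p : ℝ) - (b:ℝ)^n * ∑ k ∈ Finset.range n, f k := by
      have := hsplit
      have hbn : (b:ℝ)^n ≠ 0 := by positivity
      field_simp at this ⊢
      linarith [this]
    have h2 : (b:ℝ)^n * ∑ k ∈ Finset.range n, f k
        = ∑ k ∈ Finset.range n, (a k : ℝ) * (b:ℝ)^(n-1-k) := by
      rw [Finset.mul_sum]
      apply Finset.sum_congr rfl
      intro k hk
      have hk' := Finset.mem_range.1 hk
      have hexp : (n-1-k) + (k+1) = n := by omega
      rw [hf]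
      simp only
      rw [← hexp, pow_add]
      field_simp
      rw [show n - 1 - k + (k + 1) - 1 - k = n-1-k by omega]
      ring
    rw [h1, h2, hm]
    push_cast
    ring
  have hm01 : m = 0 ∨ m = 1 := by
    have h0 : (0:ℝ) ≤ (m:ℝ) := hmu ▸ hunneg
    have h1 : (m:ℝ) ≤ 1 := hmu ▸ hule
    have : (0:ℤ) ≤ m := by exact_mod_cast h0
    have : m ≤ 1 := by exact_mod_cast h1
    omega
  refine ⟨(m:ℝ), ?_, ?_⟩
  · rcases hm01 with h | h <;> simp [h]
  · rw [hsplit, hmu]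

/-- When `{0, b-1} ⊆ J_i` for each `i`, the set of points of the form `p/b^n` (`p ∈ ℤ^d`)
lying in the product missing digit set `K` is contained in
`⋃_{x ∈ {0,1}^d} ⋃_{i ∈ Λ^n} {g_i(x)}`, and hence has at most `2^d · N^n` elements,
where `N = ∏ #J_i`. -/
theorem stmt16 (b d n : ℕ) (hb : 3 ≤ b) (J : Fin d → Finset ℕ)
    (hJ : ∀ i, J i ⊂ Finset.range b) (h0 : ∀ i, 0 ∈ J i) (hb1 : ∀ i, b - 1 ∈ J i) :
    ({y | y ∈ prodMissingDigitSet b J ∧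
        ∃ p : Fin d → ℤ, ∀ i, y i = (p i : ℝ) / (b : ℝ) ^ n}
      ⊆ ⋃ x ∈ {x : Fin d → ℝ | ∀ i, x i = 0 ∨ x i = 1},
          ⋃ l ∈ {l : List (Fin d → ℕ) | l.length = n ∧ ∀ j ∈ l, ∀ i, j i ∈ J i},
            {gWord b l x}) ∧
    Set.ncard {y | y ∈ prodMissingDigitSet b J ∧
        ∃ p : Fin d → ℤ, ∀ i, y i = (p i : ℝ) / (b : ℝ) ^ n}
      ≤ 2 ^ d * (∏ i, (J i).card) ^ n := by
  classical
  set T : Set (Fin d → ℝ) := {y | y ∈ prodMissingDigitSet b J ∧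
        ∃ p : Fin d → ℤ, ∀ i, y i = (p i : ℝ) / (b : ℝ) ^ n} with hT
  have hsub : T ⊆ ⋃ x ∈ {x : Fin d → ℝ | ∀ i, x i = 0 ∨ x i = 1},
          ⋃ l ∈ {l : List (Fin d → ℕ) | l.length = n ∧ ∀ j ∈ l, ∀ i, j i ∈ J i},
            {gWord b l x} := by
    rintro y ⟨hK, p, hp⟩
    have hK' : ∀ i, ∃ a : ℕ → ℕ, (∀ k, a k ∈ J i) ∧
        y i = ∑' k : ℕ, (a k : ℝ) / (b : ℝ) ^ (k + 1) := hK
    choose a ha hya using hK'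
    have hdec : ∀ i, ∃ s : ℝ, (s = 0 ∨ s = 1) ∧
        ((p i : ℝ))/(b:ℝ)^n = (∑ k ∈ Finset.range n, (a i k : ℝ)/(b:ℝ)^(k+1)) + s / (b:ℝ)^n := by
      intro i
      exact digit_decomp b n hb (J i) (hJ i).subset (a i) (ha i) (p i)
        (by rw [← hya i, hp i])
    choose s hs01 hsdec using hdec
    simp only [Set.mem_iUnion, Set.mem_singleton_iff, Set.mem_setOf_eq]
    refine ⟨s, hs01, List.ofFn (fun k : Fin n => fun i => a i k), ⟨?_, ?_⟩, ?_⟩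
    · simp
    · intro j hj i
      rw [List.mem_ofFn] at hj
      obtain ⟨k, rfl⟩ := hj
      exact ha i k
    · funext i
      rw [hp i, gWord_ofFn, hsdec i]
      congr 1
      rw [← Fin.sum_univ_eq_sum_range (fun k => (a i k : ℝ)/(b:ℝ)^(k+1)) n]
  refine ⟨hsub, ?_⟩
  -- cardinality bound via a surjection from a fintype
  set φ : (Fin d → Fin 2) × (Fin n → ∀ i : Fin d, {m // m ∈ J i}) → (Fin d → ℝ) :=
    fun q => gWord b (List.ofFn fun k i => ((q.2 k i : ℕ))) (fun i => ((q.1 i : ℕ) : ℝ)) with hφ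
  have hsub2 : T ⊆ Set.range φ := by
    intro y hy
    have := hsub hy
    simp only [Set.mem_iUnion, Set.mem_singleton_iff, Set.mem_setOf_eq] at this
    obtain ⟨x, hx, l, ⟨hlen, hl⟩, rfl⟩ := this
    subst hlen
    set v : Fin d → Fin 2 := fun i => if x i = 1 then 1 else 0 with hv
    set aw : Fin l.length → ∀ i, {m // m ∈ J i} :=
      fun k i => ⟨l.get k i, hl _ (l.get_mem k) i⟩ with haw
    refine ⟨⟨v, aw⟩, ?_⟩
    have h1 : (List.ofFn fun k i => ((aw k i : ℕ))) = l := by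
      have h : (fun (k : Fin l.length) i => ((aw k i : ℕ))) = l.get := by
        funext k i; simp [haw]
      rw [h, List.ofFn_get]
    have h2 : (fun i => ((v i : ℕ) : ℝ)) = x := by
      funext i; rcases hx i with h | h <;> simp [hv, h]
    simp only [hφ, h1, h2]
  haveI : ∀ i : Fin d, Nonempty {m // m ∈ J i} := fun i => ⟨⟨0, h0 i⟩⟩
  have hfin : (Set.range φ).Finite := Set.finite_range φ
  calc T.ncard ≤ (Set.range φ).ncard := Set.ncard_le_ncard hsub2 hfin
    _ ≤ Fintype.card ((Fin d → Fin 2) × (Fin n → ∀ i : Fin d, {m // m ∈ J i})) := by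
        rw [← Set.image_univ]
        refine le_trans (Set.ncard_image_le Set.finite_univ) ?_
        rw [Set.ncard_univ, Nat.card_eq_fintype_card]
    _ = 2 ^ d * (∏ i, (J i).card) ^ n := by
        simp [Fintype.card_pi, Fintype.card_coe]
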